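/- arXiv:0710.5277 — 3 statements merged into one kernel-verified Lean document; each statement's English description precedes it below -/
import Mathlib

section
/- Let n and m be positive integers and let E > 1 be a squarefree integer. If the subfield of ℝ generated over ℚ by 2·cos(2π/n) and 2·cos(2π/m) equals ℚ(√E), then E ∈ {2, 3, 5}. -/
open Polynomial IntermediateField Module

lemma dvd120 (n : ℕ) (hn : 0 < n) (h : n.totient ≤ 4) : n ∣ 120 := by
  have key : ∀ k : ℕ, 0 < k → k ∣ n → k.totient ≤ 4 := fun k hk0 hk =>
    le_trans (Nat.le_of_dvd (Nat.totient_pos.2 hn) (Nat.totient_dvd_of_dvd hk)) h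
  rw [← Nat.factorization_le_iff_dvd hn.ne' (by norm_num)]
  rw [Finsupp.le_def]
  intro p
  by_cases hp : p.Prime
  · set k := n.factorization p with hk
    rcases Nat.eq_zero_or_pos k with h0 | hkpos
    · simp [h0]
    have hdvd : p ^ k ∣ n := Nat.ordProj_dvd n p
    have htot : (p ^ k).totient ≤ 4 := key _ (pow_pos hp.pos _) hdvd
    rw [Nat.totient_prime_pow hp hkpos] at htot
    have hp1 : p - 1 ≤ 4 := le_trans (Nat.le_mul_of_pos_left _ (pow_pos hp.pos _)) htot
    have hp5 : p ≤ 5 := by omega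
    have hp2 : 2 ≤ p := hp.two_le
    rw [← Nat.Prime.pow_dvd_iff_le_factorization hp (by norm_num : (120:ℕ) ≠ 0)]
    interval_cases p
    · -- p = 2
      have : ¬ (3 ≤ k - 1) := fun hcon =>
        absurd (Nat.pow_le_pow_right (by norm_num : 1 ≤ 2) hcon) (by omega)
      have hk3 : k ≤ 3 := by omega
      exact dvd_trans (pow_dvd_pow 2 hk3) (by norm_num)
    · -- p = 3
      have : ¬ (1 ≤ k - 1) := fun hcon =>
        absurd (Nat.pow_le_pow_right (by norm_num : 1 ≤ 3) hcon) (by omega)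
      have hk1 : k ≤ 1 := by omega
      exact dvd_trans (pow_dvd_pow 3 hk1) (by norm_num)
    · exact absurd hp (by norm_num)
    · -- p = 5
      have : ¬ (1 ≤ k - 1) := fun hcon =>
        absurd (Nat.pow_le_pow_right (by norm_num : 1 ≤ 5) hcon) (by omega)
      have hk1 : k ≤ 1 := by omega
      exact dvd_trans (pow_dvd_pow 5 hk1) (by norm_num)
  · simp [Nat.factorization_eq_zero_of_not_prime _ hp]

set_option maxRecDepth 10000 in
lemma totient_class (n : ℕ) (hn : 0 < n) (h : n.totient ≤ 4) :
    n = 1 ∨ n = 2 ∨ n = 3 ∨ n = 4 ∨ n = 5 ∨ n = 6 ∨ n = 8 ∨ n = 10 ∨ n = 12 := by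
  have h120 : n < 121 := by
    have := Nat.le_of_dvd (by norm_num) (dvd120 n hn h); omega
  have := (by decide : ∀ n < 121, n.totient ≤ 4 →
    n = 0 ∨ n = 1 ∨ n = 2 ∨ n = 3 ∨ n = 4 ∨ n = 5 ∨ n = 6 ∨ n = 8 ∨ n = 10 ∨ n = 12) n h120 h
  omega
lemma rep_quadratic {α : ℝ} (q : ℚ[X]) (hq : q.Monic) (hdeg : q.natDegree = 2)
    (hroot : Polynomial.aeval α q = 0) {x : ℝ}
    (hx : x ∈ IntermediateField.adjoin ℚ ({α} : Set ℝ)) : ∃ c0 c1 : ℚ, x = c0 + c1 * α := by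
  have hα : IsIntegral ℚ α := ⟨q, hq, by rwa [← aeval_def]⟩
  have halg : x ∈ Algebra.adjoin ℚ ({α} : Set ℝ) := by
    rw [← IntermediateField.adjoin_simple_toSubalgebra_of_isAlgebraic hα.isAlgebraic] at *
    exact hx
  rw [Algebra.adjoin_singleton_eq_range_aeval] at halg
  obtain ⟨P, hP⟩ := halg
  have hmod : Polynomial.aeval α (P %ₘ q) = x := by
    conv_rhs => rw [← hP]
    conv_rhs => rw [← Polynomial.modByMonic_add_div P q]
    simp [hroot]
  have hdegR : (P %ₘ q).degree ≤ 1 := by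
    have h2 := Polynomial.degree_modByMonic_lt P hq
    have h3 : q.degree = 2 := by
      rw [Polynomial.degree_eq_natDegree hq.ne_zero, hdeg]; rfl
    rw [h3] at h2
    exact Order.le_of_lt_succ (by exact_mod_cast h2)
  refine ⟨(P %ₘ q).coeff 0, (P %ₘ q).coeff 1, ?_⟩
  conv_lhs => rw [← hmod, Polynomial.eq_X_add_C_of_degree_le_one hdegR]
  rw [map_add, map_mul, aeval_X, aeval_C, aeval_C]
  simp only [eq_ratCast]
  ring

lemma not_isSquare_of_squarefree {E : ℕ} (hE : 1 < E) (hsf : Squarefree E) : ¬ IsSquare E := by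
  rintro ⟨y, rfl⟩
  exact absurd (Nat.isUnit_iff.mp (hsf y (dvd_refl _))) (by rintro rfl; omega)

lemma sqrtp_eq (p E : ℕ) (hp : p.Prime) (hE : 1 < E) (hsf : Squarefree E)
    (h : Real.sqrt p ∈ IntermediateField.adjoin ℚ ({Real.sqrt E} : Set ℝ)) : p = E := by
  have hE0 : (0:ℝ) ≤ (E:ℝ) := by positivity
  have hp0 : (0:ℝ) ≤ (p:ℝ) := by positivity
  have hsE : Real.sqrt E * Real.sqrt E = (E:ℝ) := Real.mul_self_sqrt hE0
  have hirrE : Irrational (Real.sqrt E) :=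
    irrational_sqrt_natCast_iff.mpr (not_isSquare_of_squarefree hE hsf)
  have hq : Polynomial.aeval (Real.sqrt E) (Polynomial.X^2 - Polynomial.C (E:ℚ)) = 0 := by
    simp [sq, hsE]
  obtain ⟨c0, c1, hrep⟩ := rep_quadratic (Polynomial.X^2 - Polynomial.C (E:ℚ))
    (Polynomial.monic_X_pow_sub_C _ (by norm_num)) (by
      rw [Polynomial.natDegree_X_pow_sub_C]) hq h
  by_cases hc1 : c1 = 0
  · exact absurd ⟨c0, by rw [hrep, hc1]; push_cast; ring⟩ hp.irrational_sqrt
  by_cases hc0 : c0 = 0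
  · -- sqrt p = c1 * sqrt E
    rw [hc0] at hrep
    rw [Rat.cast_zero, zero_add] at hrep
    have hmul : Real.sqrt ((p*E : ℕ) : ℝ) = ((c1 * E : ℚ) : ℝ) := by
      rw [Nat.cast_mul, Real.sqrt_mul hp0, hrep, Rat.cast_mul, Rat.cast_natCast, mul_assoc, hsE]
    have hsq : IsSquare (p*E) := by
      by_contra hcon
      exact (irrational_sqrt_natCast_iff.mpr hcon) ⟨(c1 * E : ℚ), hmul.symm⟩
    obtain ⟨k, hk⟩ := hsq
    have hpk : p ∣ k := hp.dvd_of_dvd_pow (n := 2) (by rw [sq, ← hk]; exact dvd_mul_right _ _)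
    obtain ⟨k', rfl⟩ := hpk
    have hEeq : E = p * (k' * k') := by
      have hppos := hp.pos
      nlinarith [hk]
    have : IsUnit k' := hsf k' (by rw [hEeq]; exact Dvd.intro_left _ rfl)
    rw [Nat.isUnit_iff.mp this] at hEeq
    omega
  · -- both nonzero: sqrt E rational, contradiction
    exfalso
    apply hirrE
    refine ⟨((p - c0^2 - c1^2*E)/(2*c0*c1) : ℚ), ?_⟩
    have hsqp : (Real.sqrt p)^2 = (p:ℝ) := Real.sq_sqrt hp0
    rw [hrep] at hsqp
    have hne : (2*(c0:ℝ)*(c1:ℝ)) ≠ 0 := by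
      exact_mod_cast (mul_ne_zero (mul_ne_zero two_ne_zero hc0) hc1 : (2*c0*c1 : ℚ) ≠ 0)
    push_cast
    rw [div_eq_iff hne]
    linear_combination -hsqp + (c1:ℝ)^2 * hsE
set_option maxHeartbeats 1000000 in
set_option synthInstance.maxHeartbeats 100000 in
lemma totient_le_four_of_mem {n : ℕ} (hn : 0 < n) {K : IntermediateField ℚ ℝ}
    [FiniteDimensional ℚ K] (hrank : finrank ℚ K = 2)
    (hx : 2 * Real.cos (2 * Real.pi / n) ∈ K) : n.totient ≤ 4 := by
  set x : ℝ := 2 * Real.cos (2 * Real.pi / n) with hxdef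
  set x' : K := ⟨x, hx⟩ with hx'def
  have hxint' : IsIntegral ℚ x' := IsIntegral.of_finite ℚ x'
  have halg : algebraMap K ℝ x' = x := rfl
  have hminK : minpoly ℚ x = minpoly ℚ x' := by
    rw [← halg, minpoly.algebraMap_eq (algebraMap K ℝ).injective]
  have hxint : IsIntegral ℚ x := by
    rw [← halg]; exact (isIntegral_algebraMap_iff (algebraMap K ℝ).injective).mpr hxint'
  have hdeg2 : (minpoly ℚ x).natDegree ≤ 2 := by
    rw [hminK]
    calc (minpoly ℚ x').natDegree ≤ finrank ℚ K := minpoly.natDegree_le x'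
    _ = 2 := hrank
  -- move to ℂ
  set xc : ℂ := (x : ℂ) with hxcdef
  have halgc : algebraMap ℝ ℂ x = xc := rfl
  have hminC : minpoly ℚ xc = minpoly ℚ x := by
    rw [← halgc, minpoly.algebraMap_eq (algebraMap ℝ ℂ).injective]
  have hxcint : IsIntegral ℚ xc := by
    rw [← halgc]; exact (isIntegral_algebraMap_iff (algebraMap ℝ ℂ).injective).mpr hxint
  set F : IntermediateField ℚ ℂ := IntermediateField.adjoin ℚ {xc} with hFdef
  haveI : FiniteDimensional ℚ F := IntermediateField.adjoin.finiteDimensional hxcint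
  have hrankF : finrank ℚ F ≤ 2 := by
    rw [hFdef, IntermediateField.adjoin.finrank hxcint, hminC]; exact hdeg2
  -- the root of unity
  set ζ : ℂ := Complex.exp (2 * Real.pi * Complex.I / n) with hζdef
  have hζ : IsPrimitiveRoot ζ n := Complex.isPrimitiveRoot_exp n hn.ne'
  have hζne : ζ ≠ 0 := Complex.exp_ne_zero _
  have hrel : ζ + ζ⁻¹ = xc := by
    have harg : (2 * Real.pi * Complex.I / n) = ((2 * Real.pi / n : ℝ) : ℂ) * Complex.I := by
      push_cast; ring
    rw [hζdef, harg, ← Complex.exp_neg, ← neg_mul, Complex.exp_mul_I, Complex.exp_mul_I]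
    rw [Complex.cos_neg, Complex.sin_neg]
    rw [hxcdef, hxdef]
    push_cast [Complex.ofReal_cos]
    ring
  -- ζ is quadratic over F
  set xg : F := IntermediateField.AdjoinSimple.gen ℚ xc with hxgdef
  have hxgmap : algebraMap F ℂ xg = xc := rfl
  have hqmonic : (Polynomial.X ^ 2 - Polynomial.C xg * Polynomial.X + 1 : Polynomial F).Monic := by
    monicity!
  have hqdeg : (Polynomial.X ^ 2 - Polynomial.C xg * Polynomial.X + 1 : Polynomial F).natDegree = 2 := by
    compute_degree!
  have hqroot : Polynomial.aeval ζ (Polynomial.X ^ 2 - Polynomial.C xg * Polynomial.X + 1 : Polynomial F) = 0 := by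
    simp only [map_add, map_sub, map_mul, map_pow, map_one, Polynomial.aeval_X,
      Polynomial.aeval_C, hxgmap]
    rw [← hrel]
    field_simp
    ring
  have hζintF : IsIntegral F ζ := ⟨_, hqmonic, by rwa [← Polynomial.aeval_def]⟩
  haveI : FiniteDimensional F F⟮ζ⟯ := IntermediateField.adjoin.finiteDimensional hζintF
  have hrankζ : finrank F F⟮ζ⟯ ≤ 2 := by
    rw [IntermediateField.adjoin.finrank hζintF]
    calc (minpoly F ζ).natDegree
        ≤ (Polynomial.X ^ 2 - Polynomial.C xg * Polynomial.X + 1 : Polynomial F).natDegree :=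
      Polynomial.natDegree_le_of_dvd (minpoly.dvd F ζ hqroot) hqmonic.ne_zero
    _ = 2 := hqdeg
  -- totient
  have hζint : IsIntegral ℚ ζ := (hζ.isIntegral hn).tower_top
  have htotζ : finrank ℚ ℚ⟮ζ⟯ = n.totient := by
    rw [IntermediateField.adjoin.finrank hζint, ← Polynomial.cyclotomic_eq_minpoly_rat hζ hn,
      Polynomial.natDegree_cyclotomic]
  have hle : ℚ⟮ζ⟯ ≤ (F⟮ζ⟯).restrictScalars ℚ := by
    rw [IntermediateField.adjoin_le_iff]
    intro z hz
    rw [Set.mem_singleton_iff] at hz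
    subst hz
    exact IntermediateField.mem_adjoin_simple_self F ζ
  haveI : FiniteDimensional ℚ ((F⟮ζ⟯).restrictScalars ℚ) :=
    FiniteDimensional.trans ℚ F F⟮ζ⟯
  have hbig : finrank ℚ ((F⟮ζ⟯).restrictScalars ℚ) ≤ 4 := by
    have htower : finrank ℚ F * finrank F F⟮ζ⟯ = finrank ℚ ((F⟮ζ⟯).restrictScalars ℚ) :=
      Module.finrank_mul_finrank ℚ F F⟮ζ⟯
    calc finrank ℚ ((F⟮ζ⟯).restrictScalars ℚ) = finrank ℚ F * finrank F F⟮ζ⟯ := htower.symm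
    _ ≤ 2 * 2 := Nat.mul_le_mul hrankF hrankζ
    _ = 4 := rfl
  have hmono : finrank ℚ ℚ⟮ζ⟯ ≤ finrank ℚ ((F⟮ζ⟯).restrictScalars ℚ) := by
    haveI : Module.Finite ℚ (((F⟮ζ⟯).restrictScalars ℚ).toSubmodule) :=
      inferInstanceAs (FiniteDimensional ℚ ((F⟮ζ⟯).restrictScalars ℚ))
    have := Submodule.finrank_mono (R := ℚ) (M := ℂ)
      (s := (ℚ⟮ζ⟯ : IntermediateField ℚ ℂ).toSubmodule)
      (t := ((F⟮ζ⟯).restrictScalars ℚ).toSubmodule) hle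
    simpa using this
  omega
lemma minpoly_sqrt_natDegree (E : ℕ) (hE : 1 < E) (hsf : Squarefree E) :
    (minpoly ℚ (Real.sqrt E)).natDegree = 2 := by
  have hE0 : (0:ℝ) ≤ (E:ℝ) := by positivity
  have hirrE : Irrational (Real.sqrt E) :=
    irrational_sqrt_natCast_iff.mpr (not_isSquare_of_squarefree hE hsf)
  have hq : Polynomial.aeval (Real.sqrt E) (Polynomial.X^2 - Polynomial.C (E:ℚ)) = 0 := by
    simp [sq, Real.mul_self_sqrt hE0]
  have hmonic : (Polynomial.X^2 - Polynomial.C (E:ℚ)).Monic :=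
    Polynomial.monic_X_pow_sub_C _ (by norm_num)
  have hint : IsIntegral ℚ (Real.sqrt E) := ⟨_, hmonic, by rwa [← Polynomial.aeval_def]⟩
  have hle : (minpoly ℚ (Real.sqrt E)).natDegree ≤ 2 := by
    calc (minpoly ℚ (Real.sqrt E)).natDegree
        ≤ (Polynomial.X^2 - Polynomial.C (E:ℚ)).natDegree :=
      Polynomial.natDegree_le_of_dvd (minpoly.dvd ℚ _ hq) hmonic.ne_zero
    _ = 2 := by rw [Polynomial.natDegree_X_pow_sub_C]
  have hpos : 0 < (minpoly ℚ (Real.sqrt E)).natDegree := minpoly.natDegree_pos hint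
  rcases (by omega : (minpoly ℚ (Real.sqrt E)).natDegree = 1 ∨
      (minpoly ℚ (Real.sqrt E)).natDegree = 2) with h1 | h2
  · exfalso
    have hdeg1 : (minpoly ℚ (Real.sqrt E)).degree = 1 := by
      rw [Polynomial.degree_eq_natDegree (minpoly.ne_zero hint), h1]; rfl
    obtain ⟨c, hc⟩ := minpoly.mem_range_of_degree_eq_one ℚ _ hdeg1
    exact hirrE ⟨c, hc⟩
  · exact h2

lemma finrank_sqrt (E : ℕ) (hE : 1 < E) (hsf : Squarefree E) :
    finrank ℚ (IntermediateField.adjoin ℚ ({Real.sqrt E} : Set ℝ)) = 2 := by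
  have hint : IsIntegral ℚ (Real.sqrt E) := by
    refine ⟨Polynomial.X^2 - Polynomial.C (E:ℚ), Polynomial.monic_X_pow_sub_C _ (by norm_num), ?_⟩
    have hE0 : (0:ℝ) ≤ (E:ℝ) := by positivity
    rw [← Polynomial.aeval_def]
    simp [sq, Real.mul_self_sqrt hE0]
  rw [IntermediateField.adjoin.finrank hint, minpoly_sqrt_natDegree E hE hsf]
lemma cos_case (n : ℕ) (hval : n = 1 ∨ n = 2 ∨ n = 3 ∨ n = 4 ∨ n = 5 ∨ n = 6 ∨ n = 8 ∨ n = 10 ∨ n = 12) :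
    (∃ r : ℚ, 2 * Real.cos (2 * Real.pi / n) = (r:ℝ)) ∨
    (∃ p : ℕ, p.Prime ∧ (p = 2 ∨ p = 3 ∨ p = 5) ∧
      Real.sqrt p ∈ IntermediateField.adjoin ℚ ({2 * Real.cos (2 * Real.pi / n)} : Set ℝ)) := by
  have h2 : Real.sqrt 2 * Real.sqrt 2 = 2 := Real.mul_self_sqrt (by norm_num)
  have h5 : Real.sqrt 5 * Real.sqrt 5 = 5 := Real.mul_self_sqrt (by norm_num)
  rcases hval with rfl | rfl | rfl | rfl | rfl | rfl | rfl | rfl | rfl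
  · left; exact ⟨2, by norm_num [Real.cos_two_pi]⟩
  · left
    refine ⟨-2, ?_⟩
    have harg : 2 * Real.pi / ((2:ℕ):ℝ) = Real.pi := by push_cast; ring
    rw [harg, Real.cos_pi]; push_cast; norm_num
  · left
    refine ⟨-1, ?_⟩
    have harg : 2 * Real.pi / ((3:ℕ):ℝ) = Real.pi - Real.pi/3 := by push_cast; ring
    rw [harg, Real.cos_pi_sub, Real.cos_pi_div_three]; push_cast; norm_num
  · left
    refine ⟨0, ?_⟩
    have harg : 2 * Real.pi / ((4:ℕ):ℝ) = Real.pi/2 := by push_cast; ring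
    rw [harg, Real.cos_pi_div_two]; norm_num
  · right
    refine ⟨5, by norm_num, by norm_num, ?_⟩
    have harg : 2 * Real.pi / ((5:ℕ):ℝ) = 2 * (Real.pi/5) := by push_cast; ring
    have hv : 2 * Real.cos (2 * Real.pi / ((5:ℕ):ℝ)) = (Real.sqrt 5 - 1)/2 := by
      rw [harg, Real.cos_two_mul, Real.cos_pi_div_five]
      linear_combination (1/4:ℝ) * h5
    have hmem : 2 * Real.cos (2 * Real.pi / ((5:ℕ):ℝ)) ∈
        IntermediateField.adjoin ℚ ({2 * Real.cos (2 * Real.pi / ((5:ℕ):ℝ))} : Set ℝ) :=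
      IntermediateField.subset_adjoin _ _ rfl
    have hs : Real.sqrt ((5:ℕ):ℝ) = (2 * Real.cos (2 * Real.pi / ((5:ℕ):ℝ))) +
        (2 * Real.cos (2 * Real.pi / ((5:ℕ):ℝ))) + 1 := by
      rw [hv]; push_cast; ring
    rw [hs]
    exact add_mem (add_mem hmem hmem) (one_mem _)
  · left
    refine ⟨1, ?_⟩
    have harg : 2 * Real.pi / ((6:ℕ):ℝ) = Real.pi/3 := by push_cast; ring
    rw [harg, Real.cos_pi_div_three]; norm_num
  · right
    refine ⟨2, by norm_num, by norm_num, ?_⟩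
    have harg : 2 * Real.pi / ((8:ℕ):ℝ) = Real.pi/4 := by push_cast; ring
    have hv : 2 * Real.cos (2 * Real.pi / ((8:ℕ):ℝ)) = Real.sqrt 2 := by
      rw [harg, Real.cos_pi_div_four]; ring
    have hs : Real.sqrt ((2:ℕ):ℝ) = 2 * Real.cos (2 * Real.pi / ((8:ℕ):ℝ)) := by
      rw [hv]; push_cast; ring
    rw [hs]
    exact IntermediateField.subset_adjoin _ _ rfl
  · right
    refine ⟨5, by norm_num, by norm_num, ?_⟩
    have harg : 2 * Real.pi / ((10:ℕ):ℝ) = Real.pi/5 := by push_cast; ring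
    have hv : 2 * Real.cos (2 * Real.pi / ((10:ℕ):ℝ)) = (1 + Real.sqrt 5)/2 := by
      rw [harg, Real.cos_pi_div_five]; ring
    have hmem : 2 * Real.cos (2 * Real.pi / ((10:ℕ):ℝ)) ∈
        IntermediateField.adjoin ℚ ({2 * Real.cos (2 * Real.pi / ((10:ℕ):ℝ))} : Set ℝ) :=
      IntermediateField.subset_adjoin _ _ rfl
    have hs : Real.sqrt ((5:ℕ):ℝ) = (2 * Real.cos (2 * Real.pi / ((10:ℕ):ℝ))) +
        (2 * Real.cos (2 * Real.pi / ((10:ℕ):ℝ))) - 1 := by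
      rw [hv]; push_cast; ring
    rw [hs]
    exact sub_mem (add_mem hmem hmem) (one_mem _)
  · right
    refine ⟨3, by norm_num, by norm_num, ?_⟩
    have harg : 2 * Real.pi / ((12:ℕ):ℝ) = Real.pi/6 := by push_cast; ring
    have hv : 2 * Real.cos (2 * Real.pi / ((12:ℕ):ℝ)) = Real.sqrt 3 := by
      rw [harg, Real.cos_pi_div_six]; ring
    have hs : Real.sqrt ((3:ℕ):ℝ) = 2 * Real.cos (2 * Real.pi / ((12:ℕ):ℝ)) := by
      rw [hv]; push_cast; ring
    rw [hs]
    exact IntermediateField.subset_adjoin _ _ rfl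

lemma isIntegral_sqrt (E : ℕ) : IsIntegral ℚ (Real.sqrt E) := by
  refine ⟨Polynomial.X^2 - Polynomial.C (E:ℚ), Polynomial.monic_X_pow_sub_C _ (by norm_num), ?_⟩
  rw [← Polynomial.aeval_def]
  simp [sq, Real.mul_self_sqrt (by positivity : (0:ℝ) ≤ (E:ℝ))]

/-- field-theoretic core of Lemma `trianglelem`: if the trace field
`ℚ(2cos(2π/n), 2cos(2π/m))` of a triangle group `Δ(n,m,∞)` equals a real quadratic field
`ℚ(√E)` with `E > 1` squarefree, then `E ∈ {2, 3, 5}`. -/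
theorem stmt1 (n m : ℕ) (hn : 0 < n) (hm : 0 < m) (E : ℕ) (hE : 1 < E) (hsf : Squarefree E)
    (h : IntermediateField.adjoin ℚ
        ({2 * Real.cos (2 * Real.pi / n), 2 * Real.cos (2 * Real.pi / m)} : Set ℝ) =
      IntermediateField.adjoin ℚ ({Real.sqrt E} : Set ℝ)) :
    E = 2 ∨ E = 3 ∨ E = 5 := by
  set a : ℝ := 2 * Real.cos (2 * Real.pi / n) with hadef
  set b : ℝ := 2 * Real.cos (2 * Real.pi / m) with hbdef
  haveI : FiniteDimensional ℚ (IntermediateField.adjoin ℚ ({Real.sqrt E} : Set ℝ)) :=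
    IntermediateField.adjoin.finiteDimensional (isIntegral_sqrt E)
  have hrank : finrank ℚ (IntermediateField.adjoin ℚ ({Real.sqrt E} : Set ℝ)) = 2 :=
    finrank_sqrt E hE hsf
  have hamem : a ∈ IntermediateField.adjoin ℚ ({Real.sqrt E} : Set ℝ) := by
    rw [← h]; exact IntermediateField.subset_adjoin _ _ (Set.mem_insert _ _)
  have hbmem : b ∈ IntermediateField.adjoin ℚ ({Real.sqrt E} : Set ℝ) := by
    rw [← h]
    exact IntermediateField.subset_adjoin _ _ (Set.mem_insert_iff.mpr (Or.inr rfl))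
  have htn : n.totient ≤ 4 := totient_le_four_of_mem hn hrank hamem
  have htm : m.totient ≤ 4 := totient_le_four_of_mem hm hrank hbmem
  -- key step: reduce to explicit values
  have casen := cos_case n (totient_class n hn htn)
  have casem := cos_case m (totient_class m hm htm)
  -- helper to conclude from a prime case
  have conclude : ∀ c : ℝ, c ∈ ({a, b} : Set ℝ) →
      (∃ p : ℕ, p.Prime ∧ (p = 2 ∨ p = 3 ∨ p = 5) ∧
        Real.sqrt p ∈ IntermediateField.adjoin ℚ ({c} : Set ℝ)) →
      E = 2 ∨ E = 3 ∨ E = 5 := by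
    rintro c hc ⟨p, hp, hp235, hpmem⟩
    have hple : IntermediateField.adjoin ℚ ({c} : Set ℝ) ≤
        IntermediateField.adjoin ℚ ({a, b} : Set ℝ) :=
      IntermediateField.adjoin.mono _ _ _ (Set.singleton_subset_iff.mpr hc)
    have : Real.sqrt p ∈ IntermediateField.adjoin ℚ ({Real.sqrt E} : Set ℝ) := by
      rw [← h]; exact hple hpmem
    have hpE : p = E := sqrtp_eq p E hp hE hsf this
    omega
  rcases casen with ⟨r1, hr1⟩ | hprime
  · rcases casem with ⟨r2, hr2⟩ | hprime'
    · -- both rational: contradiction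
      exfalso
      have hbot : IntermediateField.adjoin ℚ ({a, b} : Set ℝ) ≤ ⊥ := by
        rw [IntermediateField.adjoin_le_iff]
        rintro z (rfl | hz)
        · exact SetLike.mem_coe.mpr (IntermediateField.mem_bot.mpr ⟨r1, hr1.symm⟩)
        · rw [Set.mem_singleton_iff] at hz; subst hz
          exact SetLike.mem_coe.mpr (IntermediateField.mem_bot.mpr ⟨r2, hr2.symm⟩)
      have hsqrtmem : Real.sqrt E ∈ (⊥ : IntermediateField ℚ ℝ) := by
        apply hbot
        rw [h]
        exact IntermediateField.subset_adjoin _ _ rfl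
      rw [IntermediateField.mem_bot] at hsqrtmem
      obtain ⟨q, hq⟩ := hsqrtmem
      exact (irrational_sqrt_natCast_iff.mpr (not_isSquare_of_squarefree hE hsf)) ⟨q, hq⟩
    · exact conclude b (Set.mem_insert_iff.mpr (Or.inr rfl)) hprime'
  · exact conclude a (Set.mem_insert _ _) hprime
end

section
/- Let p ≥ 3 be a prime, R a commutative ring of characteristic p, and g ∈ R[X] a polynomial of degree at most 5. For n ≥ 1 define B_{n,1}, B_{n,2}, C_{n,1}, C_{n,2} ∈ R as the coefficients of X^{pⁿ−1}, X^{2pⁿ−1}, X^{pⁿ−2}, X^{2pⁿ−2} respectively in g^{(pⁿ−1)/2}. Then for every n ≥ 1: B_{n+1,1} = B_{n,1}^p·B_{1,1} + C_{n,1}^p·B_{1,2}; B_{n+1,2} = B_{n,2}^p·B_{1,1} + C_{n,2}^p·B_{1,2}; C_{n+1,1} = B_{n,1}^p·C_{1,1} + C_{n,1}^p·C_{1,2}; C_{n+1,2} = B_{n,2}^p·C_{1,1} + C_{n,2}^p·C_{1,2}. -/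
/-- `B_{n,k}`: the coefficient of `X^{k·pⁿ−1}` in `g^{(pⁿ−1)/2}`. -/
noncomputable def Bcoef (p : ℕ) {R : Type*} [CommRing R] (g : Polynomial R) (n k : ℕ) : R :=
  (g ^ ((p ^ n - 1) / 2)).coeff (k * p ^ n - 1)

/-- `C_{n,k}`: the coefficient of `X^{k·pⁿ−2}` in `g^{(pⁿ−1)/2}`. -/
noncomputable def Ccoef (p : ℕ) {R : Type*} [CommRing R] (g : Polynomial R) (n k : ℕ) : R :=
  (g ^ ((p ^ n - 1) / 2)).coeff (k * p ^ n - 2)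

open Polynomial

/-- In characteristic `p`, the coefficients of `h ^ p` are the `p`-th powers of those of `h`,
placed at indices divisible by `p`. -/
lemma coeff_pow_char {R : Type*} [CommRing R] (p : ℕ) (hp : p.Prime) [CharP R p]
    (h : Polynomial R) (j : ℕ) :
    (h ^ p).coeff j = if p ∣ j then h.coeff (j / p) ^ p else 0 := by
  haveI : ExpChar R p := ExpChar.prime hp
  rw [← Polynomial.map_frobenius_expand p h, coeff_map, coeff_expand hp.pos]
  split_ifs <;> simp [frobenius_def, zero_pow hp.pos.ne']

lemma key {R : Type*} [CommRing R] (p : ℕ) (hp : p.Prime) (hp3 : 3 ≤ p) [CharP R p]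
    (g : Polynomial R) (hg : g.natDegree ≤ 5) (n k r : ℕ) (hn : 1 ≤ n)
    (hk : k = 1 ∨ k = 2) (hr : r = 1 ∨ r = 2) :
    (g ^ ((p ^ (n + 1) - 1) / 2)).coeff (k * p ^ (n + 1) - r)
      = (g ^ ((p ^ n - 1) / 2)).coeff (k * p ^ n - 1) ^ p * (g ^ ((p - 1) / 2)).coeff (p - r)
      + (g ^ ((p ^ n - 1) / 2)).coeff (k * p ^ n - 2) ^ p *
          (g ^ ((p - 1) / 2)).coeff (2 * p - r) := by
  have hodd : p % 2 = 1 := Nat.odd_iff.mp (hp.odd_of_ne_two (by omega))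
  have ha3 : 3 ≤ p ^ n := le_trans hp3 (Nat.le_self_pow (by omega) p)
  have haodd : (p ^ n) % 2 = 1 := Nat.odd_iff.mp ((Nat.odd_iff.mpr hodd).pow)
  -- the exponent splits
  obtain ⟨t, ht⟩ : ∃ t, p = 2 * t + 1 := ⟨(p - 1) / 2, by omega⟩
  obtain ⟨s, hs⟩ : ∃ s, p ^ n = 2 * s + 1 := ⟨(p ^ n - 1) / 2, by omega⟩
  have hts : 1 ≤ t := by omega
  have hprod : p ^ (n + 1) = 4 * (t * s) + 2 * t + 2 * s + 1 := by
    have hps : p ^ (n + 1) = p * p ^ n := by ring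
    rw [hps, hs, ht]; ring
  have hMs : (p ^ n - 1) / 2 = s := by omega
  have hpM : p * ((p ^ n - 1) / 2) = 2 * (t * s) + s := by rw [hMs, ht]; ring
  have hsplit : (p ^ (n + 1) - 1) / 2 = p * ((p ^ n - 1) / 2) + (p - 1) / 2 := by omega
  rw [hsplit, pow_add, pow_mul', coeff_mul]
  set M := (p ^ n - 1) / 2 with hMdef
  set T := (p - 1) / 2 with hTdef
  have hT : T = t := by omega
  have hBdeg : (g ^ T).natDegree ≤ T * 5 :=
    le_trans natDegree_pow_le (Nat.mul_le_mul_left _ hg)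
  have hcoeffA : ∀ m, ((g ^ M) ^ p).coeff (p * m) = (g ^ M).coeff m ^ p := by
    intro m
    rw [coeff_pow_char p hp, if_pos ⟨m, rfl⟩, Nat.mul_div_cancel_left _ hp.pos]
  set a := p ^ n with hadef
  have hka : 3 ≤ k * a := by
    rcases hk with rfl | rfl <;> omega
  have hN : k * p ^ (n + 1) = p * (k * a) := by rw [pow_succ, hadef]; ring
  have hrp : r ≤ p := by omega
  -- the two surviving pairs
  have hmem : ∀ c : ℕ, 1 ≤ c → c ≤ k * a →
      p * (k * a - c) + (p * c - r) = k * p ^ (n + 1) - r := by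
    intro c hc1 hc2
    have h1 : p * (k * a) = p * (k * a - c) + p * c := by
      rw [← Nat.mul_add]; congr 1; omega
    have h2 : p ≤ p * c := Nat.le_mul_of_pos_right p hc1
    omega
  have hne : ((p * (k * a - 1), p - r) : ℕ × ℕ) ≠ (p * (k * a - 2), 2 * p - r) := by
    have : p - r ≠ 2 * p - r := by omega
    exact fun h => this (congrArg Prod.snd h)
  have hsub : ({(p * (k * a - 1), p - r), (p * (k * a - 2), 2 * p - r)} : Finset (ℕ × ℕ))
      ⊆ Finset.HasAntidiagonal.antidiagonal (k * p ^ (n + 1) - r) := by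
    intro x hx
    simp only [Finset.mem_insert, Finset.mem_singleton] at hx
    rcases hx with rfl | rfl <;> rw [Finset.HasAntidiagonal.mem_antidiagonal]
    · have := hmem 1 le_rfl (by omega)
      simpa using this
    · have := hmem 2 (by omega) (by omega)
      have h2 : p * 2 = 2 * p := by ring
      rw [h2] at this
      exact this
  have hzero : ∀ x ∈ Finset.HasAntidiagonal.antidiagonal (k * p ^ (n + 1) - r),
      x ∉ ({(p * (k * a - 1), p - r), (p * (k * a - 2), 2 * p - r)} : Finset (ℕ × ℕ)) →
      ((g ^ M) ^ p).coeff x.1 * (g ^ T).coeff x.2 = 0 := by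
    rintro ⟨i, j⟩ hx hnot
    rw [Finset.HasAntidiagonal.mem_antidiagonal] at hx
    by_cases hpi : p ∣ i
    · obtain ⟨m, rfl⟩ := hpi
      by_cases hj : (g ^ T).natDegree < j
      · rw [coeff_eq_zero_of_natDegree_lt hj, mul_zero]
      · exfalso
        push_neg at hj
        have hj5 : j ≤ T * 5 := le_trans hj hBdeg
        rw [hN] at hx
        have hPle : p ≤ p * (k * a) := Nat.le_mul_of_pos_right p (by omega)
        have hmlt : m < k * a := by
          have : p * m < p * (k * a) := by omega
          exact Nat.lt_of_mul_lt_mul_left this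
        obtain ⟨c, hc⟩ : ∃ c, k * a - m = c := ⟨_, rfl⟩
        have hsum : p * (k * a) = p * m + p * c := by
          rw [← Nat.mul_add]; congr 1; omega
        have hjr : j + r = p * c := by omega
        have hc0 : c ≠ 0 := by rintro rfl; simp at hjr; omega
        have hc3 : ¬ 3 ≤ c := by
          intro h3
          have h1 : p * 3 ≤ p * c := Nat.mul_le_mul_left p h3
          omega
        have hc12 : c = 1 ∨ c = 2 := by omega
        apply hnot
        simp only [Finset.mem_insert, Finset.mem_singleton, Prod.mk.injEq]
        rcases hc12 with rfl | rfl
        · left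
          constructor
          · congr 1; omega
          · have : p * 1 = p := by ring
            omega
        · right
          constructor
          · congr 1; omega
          · have : p * 2 = 2 * p := by ring
            omega
    · rw [coeff_pow_char p hp, if_neg hpi, zero_mul]
  rw [← Finset.sum_subset hsub hzero, Finset.sum_pair hne, hcoeffA, hcoeffA]

/-- the identity underlying Lemma `congruencelem`: for an odd prime `p`, a
commutative ring `R` of characteristic `p`, and `g ∈ R[X]` of degree at most `5`, the
expansion coefficients `B_{n,k}`, `C_{n,k}` of `g^{(pⁿ−1)/2}` satisfy the Frobenius-type
recursions. -/
theorem stmt11 (p : ℕ) (hp : p.Prime) (hp3 : 3 ≤ p) (R : Type*) [CommRing R] [CharP R p]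
    (g : Polynomial R) (hg : g.natDegree ≤ 5) :
    ∀ n : ℕ, 1 ≤ n →
      Bcoef p g (n + 1) 1 = Bcoef p g n 1 ^ p * Bcoef p g 1 1
          + Ccoef p g n 1 ^ p * Bcoef p g 1 2 ∧
      Bcoef p g (n + 1) 2 = Bcoef p g n 2 ^ p * Bcoef p g 1 1
          + Ccoef p g n 2 ^ p * Bcoef p g 1 2 ∧
      Ccoef p g (n + 1) 1 = Bcoef p g n 1 ^ p * Ccoef p g 1 1
          + Ccoef p g n 1 ^ p * Ccoef p g 1 2 ∧
      Ccoef p g (n + 1) 2 = Bcoef p g n 2 ^ p * Ccoef p g 1 1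
          + Ccoef p g n 2 ^ p * Ccoef p g 1 2 := by
  intro n hn
  have h1 : (1 : ℕ) = 1 ∨ (1 : ℕ) = 2 := Or.inl rfl
  have h2 : (2 : ℕ) = 1 ∨ (2 : ℕ) = 2 := Or.inr rfl
  refine ⟨?_, ?_, ?_, ?_⟩ <;>
    simp only [Bcoef, Ccoef, pow_one, one_mul] <;>
  · first
    | (have := key p hp hp3 g hg n 1 1 hn h1 h1; simpa using this)
    | (have := key p hp hp3 g hg n 2 1 hn h2 h1; simpa using this)
    | (have := key p hp hp3 g hg n 1 2 hn h1 h2; simpa using this)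
    | (have := key p hp hp3 g hg n 2 2 hn h2 h2; simpa using this)
end

section
/- Let s₀ = (1023 − 217√17)/128 ∈ ℝ, let λ = (−1 − s₀)/(1 − s₀), and let j = 256·(λ² − λ + 1)³/(λ²(λ − 1)²). Then j is not a rational number. -/
/-- `s₀ = (1023 − 217√17)/128`, the image of the fifth marked point under `τ ↦ (τ²+1)/(2τ)`. -/
noncomputable def s₀ : ℝ := (1023 - 217 * Real.sqrt 17) / 128

/-- The cross-ratio `λ` of the four marked points `(1, −1, ∞, s₀)`. -/
noncomputable def lam : ℝ := (-1 - s₀) / (1 - s₀)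

/-- The `j`-invariant of the four-point configuration. -/
noncomputable def jInv : ℝ := 256 * (lam ^ 2 - lam + 1) ^ 3 / (lam ^ 2 * (lam - 1) ^ 2)

lemma sqrt17_sq : Real.sqrt 17 ^ 2 = 17 := Real.sq_sqrt (by norm_num)

lemma sqrt17_lt : Real.sqrt 17 < 895 / 217 := by
  rw [show (895:ℝ)/217 = Real.sqrt ((895/217)^2) by
    rw [Real.sqrt_sq (by norm_num)]]
  exact Real.sqrt_lt_sqrt (by norm_num) (by norm_num)

lemma sqrt17_pos : 0 < Real.sqrt 17 := Real.sqrt_pos.mpr (by norm_num)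

lemma lam_eq : lam = 897 / 2 + (217 / 2) * Real.sqrt 17 := by
  have h1 : (1 : ℝ) - s₀ ≠ 0 := by
    have := sqrt17_lt
    unfold s₀
    intro h
    nlinarith
  rw [lam, div_eq_iff h1, s₀]
  linear_combination (-47089/256 : ℝ) * sqrt17_sq

lemma jInv_eq : jInv = 840670387009 / 8192 + (203862548967 / 8192) * Real.sqrt 17 := by
  have hpos := sqrt17_pos
  have hlam : lam = 897 / 2 + (217 / 2) * Real.sqrt 17 := lam_eq
  have h0 : lam ≠ 0 := by rw [hlam]; positivity
  have h1 : lam - 1 ≠ 0 := by rw [hlam]; nlinarith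
  have hden : lam ^ 2 * (lam - 1) ^ 2 ≠ 0 := by positivity
  rw [jInv, div_eq_iff hden, hlam]
  linear_combination ((15914054315965516748849/131072 : ℝ)
    + (15416221728869043862647/131072) * Real.sqrt 17
    + (5600233839653020985823/131072) * Real.sqrt 17 ^ 2
    + (904173325284585481209/131072) * Real.sqrt 17 ^ 3
    + 417655682263876 * Real.sqrt 17 ^ 4) * sqrt17_sq

/-- Corollary `fomcor`: the `j`-invariant of the configuration
`Σ = {1, −1, ∞, (τ²+1)/2τ}` of cusps and the elliptic point of `W₁₇^ε` is not a rational
number; hence `(W̄₁₇^ε, Σ)` cannot be defined over `ℚ`. -/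
theorem stmt16 : ¬ ∃ q : ℚ, (q : ℝ) = jInv := by
  rintro ⟨q, hq⟩
  have hirr : Irrational (Real.sqrt 17) := (by norm_num : Nat.Prime 17).irrational_sqrt
  rw [jInv_eq] at hq
  have : Real.sqrt 17 = ((q - 840670387009 / 8192) * (8192 / 203862548967) : ℚ) := by
    push_cast
    linarith
  exact hirr ⟨_, this.symm⟩
end
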